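/- Let A be a von Neumann algebra on H and F ∈ A with closed range. Suppose D, F ∈ A with Im F, Im D, Im DF all closed. Let W̃ denote the orthogonal complement of ker F inside ker DF. Then F maps W̃ isomorphically onto ker D ∩ Im F, and consequently the projection P_{W̃} = P_{ker DF} − P_{ker F} is Murray–von Neumann equivalent in A to P_{ker D ∩ Im F}. -/

import Mathlib

open ContinuousLinearMap

variable {H : Type*} [NormedAddCommGroup H] [InnerProductSpace ℂ H] [CompleteSpace H]

/-- Murray–von Neumann equivalence of `p` and `q`, witnessed inside the set `S`. -/
def MvN {R : Type*} [Ring R] [StarRing R] (S : Set R) (p q : R) : Prop :=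
  ∃ v ∈ S, v * star v = p ∧ star v * v = q

/-- `P` is the orthogonal projection of `H` onto the subspace `K`. -/
def IsOrthProjOnto (P : H →L[ℂ] H) (K : Submodule ℂ H) : Prop :=
  P * P = P ∧ star P = P ∧ LinearMap.range (P : H →ₗ[ℂ] H) = K

namespace IsOrthProjOnto

variable {P Q : H →L[ℂ] H} {K : Submodule ℂ H}

theorem apply_mem_self (h : IsOrthProjOnto P K) {x : H} (hx : x ∈ K) : P x = x := by
  obtain ⟨y, rfl⟩ := h.2.2 ▸ hx
  have := congrArg (fun T : H →L[ℂ] H => T y) h.1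
  simpa [mul_apply] using this

theorem isClosed (h : IsOrthProjOnto P K) : IsClosed (K : Set H) := by
  have : (K : Set H) = (LinearMap.ker ((1 - P : H →L[ℂ] H) : H →ₗ[ℂ] H) : Set H) := by
    ext x
    simp only [SetLike.mem_coe, LinearMap.mem_ker, ContinuousLinearMap.coe_coe, ContinuousLinearMap.sub_apply,
      ContinuousLinearMap.one_apply, sub_eq_zero]
    constructor
    · intro hx; exact (h.apply_mem_self hx).symm
    · intro hx; rw [← h.2.2]; exact ⟨x, hx.symm⟩
  rw [this]
  exact ContinuousLinearMap.isClosed_ker _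

theorem inner_map_left (h : IsOrthProjOnto P K) (x y : H) :
    (inner ℂ (P x) y : ℂ) = inner ℂ x (P y) := by
  conv_lhs => rw [← h.2.1, star_eq_adjoint]
  exact adjoint_inner_left P y x

theorem apply_eq_zero_iff (h : IsOrthProjOnto P K) {x : H} : P x = 0 ↔ x ∈ Kᗮ := by
  constructor
  · intro hx
    rw [Submodule.mem_orthogonal]
    intro u hu
    rw [← h.apply_mem_self hu, h.inner_map_left, hx, inner_zero_right]
  · intro hx
    have h1 : (inner ℂ (P x) (P x) : ℂ) = inner ℂ x (P (P x)) := h.inner_map_left x (P x)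
    have h2 : P (P x) = P x := by
      have := congrArg (fun T : H →L[ℂ] H => T x) h.1
      simpa [mul_apply] using this
    rw [h2] at h1
    have h3 : (inner ℂ x (P x) : ℂ) = 0 := by
      have : P x ∈ K := h.2.2 ▸ ⟨x, rfl⟩
      have := (Submodule.mem_orthogonal _ x).mp hx (P x) this
      rw [← inner_conj_symm, this, map_zero]
    rw [h3] at h1
    rwa [inner_self_eq_zero] at h1

theorem unique (h : IsOrthProjOnto P K) (h' : IsOrthProjOnto Q K) : P = Q := by
  haveI : CompleteSpace K := h.isClosed.completeSpace_coe
  ext x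
  obtain ⟨y, hy, z, hz, rfl⟩ := K.exists_add_mem_mem_orthogonal x
  rw [map_add, map_add, h.apply_mem_self hy, h'.apply_mem_self hy,
    h.apply_eq_zero_iff.mpr hz, h'.apply_eq_zero_iff.mpr hz]

end IsOrthProjOnto

/-- The subalgebra of continuous functions whose image under `cfcHom` commutes with `b`. -/
noncomputable def commuteCfcSubalgebra {a : H →L[ℂ] H} (ha : IsSelfAdjoint a)
    (b : H →L[ℂ] H) : Subalgebra ℝ C(spectrum ℝ a, ℝ) where
  carrier := {g | b * cfcHom (R := ℝ) ha g = cfcHom (R := ℝ) ha g * b}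
  mul_mem' := by
    intro g₁ g₂ h₁ h₂
    show b * cfcHom (R := ℝ) ha (g₁ * g₂) = cfcHom (R := ℝ) ha (g₁ * g₂) * b
    rw [map_mul, ← mul_assoc, h₁, mul_assoc, h₂, mul_assoc]
  add_mem' := by
    intro g₁ g₂ h₁ h₂
    show b * cfcHom (R := ℝ) ha (g₁ + g₂) = cfcHom (R := ℝ) ha (g₁ + g₂) * b
    rw [map_add, mul_add, add_mul, h₁, h₂]
  algebraMap_mem' := by
    intro r
    show b * cfcHom (R := ℝ) ha _ = cfcHom (R := ℝ) ha _ * b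
    rw [AlgHomClass.commutes]
    exact (Algebra.commutes r b).symm

/-- Anything commuting with a selfadjoint operator commutes with its continuous functional
calculus. -/
theorem commute_cfc_of_commute {a b : H →L[ℂ] H} (ha : IsSelfAdjoint a)
    (hb : b * a = a * b) (f : ℝ → ℝ) : b * cfc f a = cfc f a * b := by
  by_cases hf : ContinuousOn f (spectrum ℝ a)
  · have hΦc : Continuous (cfcHom (R := ℝ) ha) := (cfcHom_isClosedEmbedding ha).continuous
    have hclosed : IsClosed ((commuteCfcSubalgebra ha b :
        Subalgebra ℝ C(spectrum ℝ a, ℝ)) : Set C(spectrum ℝ a, ℝ)) :=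
      isClosed_eq (continuous_const.mul hΦc) (hΦc.mul continuous_const)
    have hpoly : polynomialFunctions (spectrum ℝ a) ≤ commuteCfcSubalgebra ha b := by
      rw [polynomialFunctions.eq_adjoin_X]
      apply Algebra.adjoin_le
      rintro g hg
      rw [Set.mem_singleton_iff] at hg
      subst hg
      show b * cfcHom (R := ℝ) ha _ = cfcHom (R := ℝ) ha _ * b
      have hX : (Polynomial.toContinuousMapOnAlgHom (spectrum ℝ a)) Polynomial.X =
          (ContinuousMap.restrict (spectrum ℝ a) (ContinuousMap.id ℝ)) := by
        ext x; simp
      rw [hX, cfcHom_id ha]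
      exact hb
    have htop : (polynomialFunctions (spectrum ℝ a)).topologicalClosure = ⊤ :=
      ContinuousMap.subalgebra_topologicalClosure_eq_top_of_separatesPoints _
        (polynomialFunctions_separatesPoints _)
    have hle : (polynomialFunctions (spectrum ℝ a)).topologicalClosure ≤
        commuteCfcSubalgebra ha b :=
      Subalgebra.topologicalClosure_minimal hpoly hclosed
    have main : ∀ g : C(spectrum ℝ a, ℝ),
        b * cfcHom (R := ℝ) ha g = cfcHom (R := ℝ) ha g * b :=
      fun g => hle (htop ▸ Algebra.mem_top)
    rw [cfc_apply f a ha hf]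
    exact main _
  · rw [cfc_apply_of_not_continuousOn a hf, mul_zero, zero_mul]

theorem comm_inv {M : Type*} [Monoid M] {a b ai : M} (h1 : a * ai = 1) (h2 : ai * a = 1)
    (h : b * a = a * b) : b * ai = ai * b := by
  calc b * ai = (ai * a) * (b * ai) := by rw [h2, one_mul]
    _ = ai * ((a * b) * ai) := by simp only [mul_assoc]
    _ = ai * ((b * a) * ai) := by rw [h]
    _ = (ai * b) * (a * ai) := by simp only [mul_assoc]
    _ = ai * b := by rw [h1, mul_one]

/-- membership in a von Neumann algebra via the double commutant property -/
theorem VonNeumannAlgebra.mem_of_commutes (A : VonNeumannAlgebra H) {z : H →L[ℂ] H}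
    (h : ∀ g ∈ Set.centralizer (A : Set (H →L[ℂ] H)), g * z = z * g) : z ∈ A := by
  have : z ∈ Set.centralizer (Set.centralizer (A : Set (H →L[ℂ] H))) :=
    Set.mem_centralizer_iff.mpr h
  rwa [A.centralizer_centralizer] at this

theorem part1 (D F : H →L[ℂ] H) :
    Set.InjOn F ((LinearMap.ker ((D * F : H →L[ℂ] H) : H →ₗ[ℂ] H) ⊓ (LinearMap.ker (F : H →ₗ[ℂ] H))ᗮ : Submodule ℂ H) : Set H) := by
  intro x hx y hy hxy
  rw [SetLike.mem_coe, Submodule.mem_inf] at hx hy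
  have h1 : x - y ∈ LinearMap.ker (F : H →ₗ[ℂ] H) := by
    rw [LinearMap.mem_ker, ContinuousLinearMap.coe_coe, map_sub, hxy, sub_self]
  have h2 : x - y ∈ (LinearMap.ker (F : H →ₗ[ℂ] H))ᗮ := Submodule.sub_mem _ hx.2 hy.2
  have := (Submodule.orthogonal_disjoint (LinearMap.ker (F : H →ₗ[ℂ] H))).le_bot ⟨h1, h2⟩
  rw [Submodule.mem_bot] at this
  exact sub_eq_zero.mp this

theorem part2 (D F : H →L[ℂ] H) :
    F '' ((LinearMap.ker ((D * F : H →L[ℂ] H) : H →ₗ[ℂ] H) ⊓ (LinearMap.ker (F : H →ₗ[ℂ] H))ᗮ : Submodule ℂ H) : Set H) =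
      ((LinearMap.ker (D : H →ₗ[ℂ] H) ⊓ LinearMap.range (F : H →ₗ[ℂ] H) : Submodule ℂ H) : Set H) := by
  haveI : CompleteSpace (LinearMap.ker (F : H →ₗ[ℂ] H)) := (ContinuousLinearMap.isClosed_ker F).completeSpace_coe
  ext y
  constructor
  · rintro ⟨x, hx, rfl⟩
    rw [SetLike.mem_coe, Submodule.mem_inf] at hx
    refine ⟨?_, ⟨x, rfl⟩⟩
    have := hx.1
    rwa [LinearMap.mem_ker, ContinuousLinearMap.coe_coe, ContinuousLinearMap.mul_apply] at this
  · rintro ⟨hyD, x, rfl⟩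
    obtain ⟨a, ha, b, hb, rfl⟩ := (LinearMap.ker (F : H →ₗ[ℂ] H)).exists_add_mem_mem_orthogonal x
    have hFa : F a = 0 := ha
    refine ⟨b, ?_, by rw [ContinuousLinearMap.coe_coe, map_add, hFa, zero_add]⟩
    rw [SetLike.mem_coe, Submodule.mem_inf]
    refine ⟨?_, hb⟩
    rw [LinearMap.mem_ker, ContinuousLinearMap.coe_coe, ContinuousLinearMap.mul_apply]
    have : F b = F (a + b) := by rw [map_add, hFa, zero_add]
    rw [this]
    exact hyD

set_option maxHeartbeats 2000000 in
theorem kernel_quotient_equiv (A : VonNeumannAlgebra H) (D F : H →L[ℂ] H)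
    (hD : D ∈ A) (hF : F ∈ A)
    (hranF : IsClosed (LinearMap.range (F : H →ₗ[ℂ] H) : Set H))
    (hranD : IsClosed (LinearMap.range (D : H →ₗ[ℂ] H) : Set H))
    (hranDF : IsClosed (LinearMap.range ((D * F : H →L[ℂ] H) : H →ₗ[ℂ] H) : Set H)) :
    Set.InjOn F ((LinearMap.ker ((D * F : H →L[ℂ] H) : H →ₗ[ℂ] H) ⊓ (LinearMap.ker (F : H →ₗ[ℂ] H))ᗮ : Submodule ℂ H) : Set H) ∧
    F '' ((LinearMap.ker ((D * F : H →L[ℂ] H) : H →ₗ[ℂ] H) ⊓ (LinearMap.ker (F : H →ₗ[ℂ] H))ᗮ : Submodule ℂ H) : Set H) =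
      ((LinearMap.ker (D : H →ₗ[ℂ] H) ⊓ LinearMap.range (F : H →ₗ[ℂ] H) : Submodule ℂ H) : Set H) ∧
    (∀ PW PK PkDF PkF : H →L[ℂ] H,
      IsOrthProjOnto PW (LinearMap.ker ((D * F : H →L[ℂ] H) : H →ₗ[ℂ] H) ⊓ (LinearMap.ker (F : H →ₗ[ℂ] H))ᗮ) →
      IsOrthProjOnto PK (LinearMap.ker (D : H →ₗ[ℂ] H) ⊓ LinearMap.range (F : H →ₗ[ℂ] H)) →
      IsOrthProjOnto PkDF (LinearMap.ker ((D * F : H →L[ℂ] H) : H →ₗ[ℂ] H)) →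
      IsOrthProjOnto PkF (LinearMap.ker (F : H →ₗ[ℂ] H)) →
      PW = PkDF - PkF ∧ MvN (A : Set (H →L[ℂ] H)) PW PK) := by
  refine ⟨part1 D F, part2 D F, ?_⟩
  intro PW PK PkDF PkF hPW hPK hPkDF hPkF
  -- Step (a): `PW = PkDF - PkF`
  have hsub : LinearMap.ker (F : H →ₗ[ℂ] H) ≤ LinearMap.ker ((D * F : H →L[ℂ] H) : H →ₗ[ℂ] H) := by
    intro x hx
    rw [LinearMap.mem_ker, ContinuousLinearMap.coe_coe] at hx ⊢
    rw [ContinuousLinearMap.mul_apply, hx, map_zero]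
  have hPQ : PkDF * PkF = PkF := by
    ext x
    rw [ContinuousLinearMap.mul_apply]
    exact hPkDF.apply_mem_self (hsub (hPkF.2.2 ▸ ⟨x, rfl⟩))
  have hQP : PkF * PkDF = PkF := by
    have := congrArg star hPQ
    rwa [star_mul, hPkDF.2.1, hPkF.2.1] at this
  have hdiff : IsOrthProjOnto (PkDF - PkF) (LinearMap.ker ((D * F : H →L[ℂ] H) : H →ₗ[ℂ] H) ⊓ (LinearMap.ker (F : H →ₗ[ℂ] H))ᗮ) := by
    refine ⟨?_, ?_, ?_⟩
    · rw [mul_sub, sub_mul, sub_mul, hPkDF.1, hPQ, hQP, hPkF.1]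
      abel
    · rw [star_sub, hPkDF.2.1, hPkF.2.1]
    · apply le_antisymm
      · rintro y ⟨x, rfl⟩
        rw [Submodule.mem_inf]
        constructor
        · rw [← hPkDF.2.2]
          have h1 : PkDF * (PkDF - PkF) = PkDF - PkF := by
            rw [mul_sub, hPkDF.1, hPQ]
          exact ⟨(PkDF - PkF) x, congrArg (fun W : H →L[ℂ] H => W x) h1⟩
        · have h2 : PkF * (PkDF - PkF) = 0 := by
            rw [mul_sub, hQP, hPkF.1, sub_self]
          rw [← hPkF.2.2] at *
          apply hPkF.apply_eq_zero_iff.mp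
          · exact congrArg (fun W : H →L[ℂ] H => W x) h2
      · intro x hx
        rw [Submodule.mem_inf] at hx
        refine ⟨x, ?_⟩
        rw [ContinuousLinearMap.coe_coe, sub_apply, hPkDF.apply_mem_self hx.1, hPkF.apply_eq_zero_iff.mpr hx.2, sub_zero]
  refine ⟨hPW.unique hdiff, ?_⟩
  -- Step (b): construction of a partial isometry
  haveI hWtsC : CompleteSpace (LinearMap.ker ((D * F : H →L[ℂ] H) : H →ₗ[ℂ] H) ⊓ (LinearMap.ker (F : H →ₗ[ℂ] H))ᗮ : Submodule ℂ H) :=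
    hPW.isClosed.completeSpace_coe
  haveI hKC : CompleteSpace (LinearMap.ker (D : H →ₗ[ℂ] H) ⊓ LinearMap.range (F : H →ₗ[ℂ] H) : Submodule ℂ H) :=
    hPK.isClosed.completeSpace_coe
  have hmapsto : ∀ w : (LinearMap.ker ((D * F : H →L[ℂ] H) : H →ₗ[ℂ] H) ⊓ (LinearMap.ker (F : H →ₗ[ℂ] H))ᗮ : Submodule ℂ H),
      F ((Submodule.subtypeL _) w) ∈ (LinearMap.ker (D : H →ₗ[ℂ] H) ⊓ LinearMap.range (F : H →ₗ[ℂ] H) : Submodule ℂ H) := by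
    intro w
    have : (F w : H) ∈ F '' ((LinearMap.ker ((D * F : H →L[ℂ] H) : H →ₗ[ℂ] H) ⊓ (LinearMap.ker (F : H →ₗ[ℂ] H))ᗮ : Submodule ℂ H) : Set H) :=
      ⟨w, w.2, rfl⟩
    rw [part2 D F] at this
    exact this
  set T₀ := ContinuousLinearMap.codRestrict
    (F.comp (Submodule.subtypeL (LinearMap.ker ((D * F : H →L[ℂ] H) : H →ₗ[ℂ] H) ⊓ (LinearMap.ker (F : H →ₗ[ℂ] H))ᗮ : Submodule ℂ H)))
    (LinearMap.ker (D : H →ₗ[ℂ] H) ⊓ LinearMap.range (F : H →ₗ[ℂ] H) : Submodule ℂ H) hmapsto with hT₀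
  have hT₀ker : LinearMap.ker T₀.toLinearMap = ⊥ := by
    rw [Submodule.eq_bot_iff]
    intro w hw
    rw [LinearMap.mem_ker] at hw
    have hFw : F (w : H) = 0 := congrArg Subtype.val hw
    have hw2 := w.2
    rw [Submodule.mem_inf] at hw2
    have : (w : H) ∈ LinearMap.ker (F : H →ₗ[ℂ] H) ⊓ (LinearMap.ker (F : H →ₗ[ℂ] H))ᗮ := ⟨hFw, hw2.2⟩
    have h0 := (Submodule.orthogonal_disjoint (LinearMap.ker (F : H →ₗ[ℂ] H))).le_bot this
    rw [Submodule.mem_bot] at h0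
    exact Subtype.ext h0
  have hT₀range : LinearMap.range T₀.toLinearMap = ⊤ := by
    rw [Submodule.eq_top_iff']
    intro y
    have : (y : H) ∈ F '' ((LinearMap.ker ((D * F : H →L[ℂ] H) : H →ₗ[ℂ] H) ⊓ (LinearMap.ker (F : H →ₗ[ℂ] H))ᗮ : Submodule ℂ H) : Set H) := by
      rw [part2 D F]; exact y.2
    obtain ⟨w, hw, hwy⟩ := this
    exact ⟨⟨w, hw⟩, Subtype.ext hwy⟩
  set e := ContinuousLinearEquiv.ofBijective T₀ hT₀ker hT₀range with he
  set c : ℝ := max ‖(e.symm : (LinearMap.ker (D : H →ₗ[ℂ] H) ⊓ LinearMap.range (F : H →ₗ[ℂ] H) : Submodule ℂ H) →L[ℂ]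
    (LinearMap.ker ((D * F : H →L[ℂ] H) : H →ₗ[ℂ] H) ⊓ (LinearMap.ker (F : H →ₗ[ℂ] H))ᗮ : Submodule ℂ H))‖ 1 with hc
  have hc1 : (1 : ℝ) ≤ c := le_max_right _ _
  have hc0 : (0 : ℝ) < c := lt_of_lt_of_le one_pos hc1
  have hbdd : ∀ w, ∀ hw : w ∈ (LinearMap.ker ((D * F : H →L[ℂ] H) : H →ₗ[ℂ] H) ⊓ (LinearMap.ker (F : H →ₗ[ℂ] H))ᗮ : Submodule ℂ H),
      ‖w‖ ≤ c * ‖F w‖ := by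
    intro w hw
    set einv : (LinearMap.ker (D : H →ₗ[ℂ] H) ⊓ LinearMap.range (F : H →ₗ[ℂ] H) : Submodule ℂ H) →L[ℂ]
        (LinearMap.ker ((D * F : H →L[ℂ] H) : H →ₗ[ℂ] H) ⊓ (LinearMap.ker (F : H →ₗ[ℂ] H))ᗮ : Submodule ℂ H) := ↑e.symm with heinv
    have h1 : (⟨w, hw⟩ : (LinearMap.ker ((D * F : H →L[ℂ] H) : H →ₗ[ℂ] H) ⊓ (LinearMap.ker (F : H →ₗ[ℂ] H))ᗮ : Submodule ℂ H)) =
        einv (e ⟨w, hw⟩) := (e.symm_apply_apply _).symm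
    have h2 : ‖w‖ = ‖einv (e ⟨w, hw⟩)‖ := by rw [← h1]; rfl
    have h3 : ‖einv (e ⟨w, hw⟩)‖ ≤ ‖einv‖ * ‖e ⟨w, hw⟩‖ :=
      ContinuousLinearMap.le_opNorm _ _
    have h4 : ‖e ⟨w, hw⟩‖ = ‖F w‖ := rfl
    rw [h2, ← h4]
    calc ‖einv (e ⟨w, hw⟩)‖ ≤ ‖einv‖ * ‖e ⟨w, hw⟩‖ := h3
      _ ≤ c * ‖e ⟨w, hw⟩‖ :=
        mul_le_mul_of_nonneg_right (le_max_left _ _) (norm_nonneg _)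
  -- the operator `S` and its inverse
  set T : H →L[ℂ] H := F * PW with hT
  have hTPW : T * PW = T := by rw [hT, mul_assoc, hPW.1]
  have hPWstarT : PW * star T = star T := by
    rw [hT, star_mul, hPW.2.1, ← mul_assoc, hPW.1]
  set S : H →L[ℂ] H := star T * T + (1 - PW) with hS
  have hSPW : S * PW = star T * T := by
    rw [hS, add_mul, sub_mul, one_mul, hPW.1, sub_self, add_zero, mul_assoc, hTPW]
  have hPWS : PW * S = star T * T := by
    rw [hS, mul_add, mul_sub, mul_one, hPW.1, sub_self, add_zero, ← mul_assoc, hPWstarT]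
  have hS1PW : S * (1 - PW) = 1 - PW := by
    have h1 : S * (1 - PW) = S - S * PW := by rw [mul_sub, mul_one]
    rw [h1, hSPW, hS]; abel
  have hSsa : star S = S := by
    rw [hS, star_add, star_mul, star_star, star_sub, star_one, hPW.2.1]
  -- inner product estimates
  have hproj_idem : (1 - PW) * (1 - PW) = 1 - PW := by
    rw [sub_mul, one_mul, mul_sub, mul_one, hPW.1, sub_self, sub_zero]
  have hproj_sa : star (1 - PW) = 1 - PW := by rw [star_sub, star_one, hPW.2.1]
  have hproj_inner : ∀ (Q : H →L[ℂ] H), Q * Q = Q → star Q = Q → ∀ x : H,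
      (inner ℂ (Q x) x : ℂ) = (‖Q x‖ : ℂ) ^ 2 := by
    intro Q hQ hQs x
    have h2 : Q (Q x) = Q x := by
      have := congrArg (fun W : H →L[ℂ] H => W x) hQ
      simpa [mul_apply] using this
    have hmap : ∀ y z : H, (inner ℂ (Q y) z : ℂ) = inner ℂ y (Q z) := by
      intro y z
      conv_lhs => rw [← hQs, star_eq_adjoint]
      exact adjoint_inner_left Q z y
    calc (inner ℂ (Q x) x : ℂ) = inner ℂ (Q (Q x)) x := by rw [h2]
      _ = inner ℂ (Q x) (Q x) := hmap (Q x) x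
      _ = (‖Q x‖ : ℂ) ^ 2 := inner_self_eq_norm_sq_to_K _
  have hre : ∀ x : H, Complex.re (inner ℂ (S x) x : ℂ) = ‖T x‖ ^ 2 + ‖(1 - PW) x‖ ^ 2 := by
    intro x
    have h1 : (inner ℂ ((star T * T) x) x : ℂ) = (‖T x‖ : ℂ) ^ 2 := by
      rw [ContinuousLinearMap.mul_apply, star_eq_adjoint]
      calc (inner ℂ ((adjoint T) (T x)) x : ℂ) = inner ℂ (T x) (T x) := adjoint_inner_left T x (T x)
        _ = (‖T x‖ : ℂ) ^ 2 := inner_self_eq_norm_sq_to_K _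
    have h2 : (inner ℂ ((1 - PW) x) x : ℂ) = (‖(1 - PW) x‖ : ℂ) ^ 2 :=
      hproj_inner _ hproj_idem hproj_sa x
    rw [hS, add_apply, inner_add_left, h1, h2, ← Complex.ofReal_pow, ← Complex.ofReal_pow,
      ← Complex.ofReal_add, Complex.ofReal_re]
  have hpyth : ∀ x : H, ‖x‖ ^ 2 = ‖PW x‖ ^ 2 + ‖(1 - PW) x‖ ^ 2 := by
    intro x
    have hx : x = PW x + (1 - PW) x := by
      rw [sub_apply, ContinuousLinearMap.one_apply]; abel
    have hPW1PW : PW * (1 - PW) = 0 := by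
      rw [mul_sub, mul_one, hPW.1, sub_self]
    have horth : (inner ℂ (PW x) ((1 - PW) x) : ℂ) = 0 := by
      have hmap : (inner ℂ (PW x) ((1 - PW) x) : ℂ) = inner ℂ x (PW ((1 - PW) x)) :=
        hPW.inner_map_left x ((1 - PW) x)
      have h0 : PW ((1 - PW) x) = 0 := by
        have := congrArg (fun W : H →L[ℂ] H => W x) hPW1PW
        simpa [mul_apply] using this
      rw [hmap, h0, inner_zero_right]
    have := norm_add_sq_eq_norm_sq_add_norm_sq_of_inner_eq_zero _ _ horth
    conv_lhs => rw [hx]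
    rw [pow_two, pow_two, pow_two]
    exact this
  have hTlow : ∀ x : H, ‖PW x‖ ≤ c * ‖T x‖ := by
    intro x
    have hmem : PW x ∈ (LinearMap.ker ((D * F : H →L[ℂ] H) : H →ₗ[ℂ] H) ⊓ (LinearMap.ker (F : H →ₗ[ℂ] H))ᗮ : Submodule ℂ H) :=
      hPW.2.2 ▸ ⟨x, rfl⟩
    have h2 := hbdd (PW x) hmem
    have h3 : F (PW x) = T x := rfl
    rwa [h3] at h2
  have hlow : ∀ x : H, ‖x‖ ^ 2 ≤ c ^ 2 * Complex.re (inner ℂ (S x) x : ℂ) := by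
    intro x
    rw [hre x, hpyth x]
    have h1 : ‖PW x‖ ^ 2 ≤ c ^ 2 * ‖T x‖ ^ 2 := by
      have := pow_le_pow_left₀ (norm_nonneg (PW x)) (hTlow x) 2
      rwa [mul_pow] at this
    have hcsq : (1 : ℝ) ≤ c ^ 2 := by nlinarith [hc1, hc0]
    have h2 : ‖(1 - PW) x‖ ^ 2 ≤ c ^ 2 * ‖(1 - PW) x‖ ^ 2 :=
      le_mul_of_one_le_left (sq_nonneg _) hcsq
    rw [mul_add]
    exact add_le_add h1 h2
  have hSb : ∀ x : H, ‖x‖ ≤ c ^ 2 * ‖S x‖ := by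
    intro x
    rcases eq_or_ne x 0 with rfl | hx
    · simp
    have hpos : 0 < ‖x‖ := norm_pos_iff.mpr hx
    have h1 : Complex.re (inner ℂ (S x) x : ℂ) ≤ ‖S x‖ * ‖x‖ := by
      calc Complex.re (inner ℂ (S x) x : ℂ) ≤ ‖(inner ℂ (S x) x : ℂ)‖ := Complex.re_le_norm _
        _ ≤ ‖S x‖ * ‖x‖ := norm_inner_le_norm _ _
    have h2 := hlow x
    nlinarith [sq_nonneg c]
  have hSker : LinearMap.ker (S : H →ₗ[ℂ] H) = ⊥ := by
    rw [Submodule.eq_bot_iff]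
    intro x hx
    rw [LinearMap.mem_ker, ContinuousLinearMap.coe_coe] at hx
    have := hSb x
    rw [hx, norm_zero, mul_zero] at this
    exact norm_le_zero_iff.mp this
  have hSrange : LinearMap.range (S : H →ₗ[ℂ] H) = ⊤ := by
    have halip : AntilipschitzWith (⟨c ^ 2, by positivity⟩ : NNReal) S :=
      S.antilipschitz_of_bound (fun x => hSb x)
    have hSclosed : IsClosed (Set.range S) :=
      halip.isClosed_range S.uniformContinuous
    have hcl : IsClosed ((LinearMap.range (S : H →ₗ[ℂ] H) : Submodule ℂ H) : Set H) := by
      have : ((LinearMap.range (S : H →ₗ[ℂ] H) : Submodule ℂ H) : Set H) = Set.range S :=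
        LinearMap.coe_range _
      rw [this]; exact hSclosed
    haveI : CompleteSpace (LinearMap.range (S : H →ₗ[ℂ] H) : Submodule ℂ H) := hcl.completeSpace_coe
    rw [← Submodule.orthogonal_eq_bot_iff, Submodule.eq_bot_iff]
    intro y hy
    have h0 : (inner ℂ (S y) y : ℂ) = 0 :=
      (Submodule.mem_orthogonal _ y).mp hy (S y) ⟨y, rfl⟩
    have h1 := hlow y
    rw [h0] at h1
    simp only [Complex.zero_re, mul_zero] at h1
    have : ‖y‖ = 0 := by nlinarith [norm_nonneg y]
    exact norm_eq_zero.mp this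
  set eS := ContinuousLinearEquiv.ofBijective S hSker hSrange with heS
  set Sinv : H →L[ℂ] H := (eS.symm : H →L[ℂ] H) with hSinv
  have hSS : S * Sinv = 1 := by
    ext x
    show S (eS.symm x) = x
    exact eS.apply_symm_apply x
  have hSS' : Sinv * S = 1 := by
    ext x
    show eS.symm (S x) = x
    exact eS.symm_apply_apply x
  have hSinv_sa : star Sinv = Sinv := by
    calc star Sinv = star Sinv * (S * Sinv) := by rw [hSS, mul_one]
      _ = (star Sinv * star S) * Sinv := by rw [hSsa, mul_assoc]
      _ = star (S * Sinv) * Sinv := by rw [star_mul]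
      _ = Sinv := by rw [hSS, star_one, one_mul]
  have hSinv_nonneg : (0 : H →L[ℂ] H) ≤ Sinv := by
    rw [ContinuousLinearMap.nonneg_iff_isPositive]
    refine ⟨ContinuousLinearMap.isSelfAdjoint_iff_isSymmetric.mp hSinv_sa, ?_⟩
    intro x
    have hx : S (Sinv x) = x := by
      have := congrArg (fun W : H →L[ℂ] H => W x) hSS
      simpa [mul_apply] using this
    have h1 : ContinuousLinearMap.reApplyInnerSelf Sinv x =
        Complex.re (inner ℂ (Sinv x) x : ℂ) := rfl
    rw [h1]
    have h2 : (inner ℂ (Sinv x) x : ℂ) = inner ℂ (Sinv x) (S (Sinv x)) :=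
      congrArg (fun z : H => (inner ℂ (Sinv x) z : ℂ)) hx.symm
    have h3 : Complex.re (inner ℂ (Sinv x) (S (Sinv x)) : ℂ) =
        Complex.re (inner ℂ (S (Sinv x)) (Sinv x) : ℂ) := by
      rw [← RCLike.re_to_complex, ← RCLike.re_to_complex]
      exact inner_re_symm _ _
    rw [h2, h3]
    have := hlow (Sinv x)
    nlinarith [sq_nonneg ‖Sinv x‖, pow_pos hc0 2]
  have hSinvsa' : IsSelfAdjoint Sinv := hSinv_sa
  set R : H →L[ℂ] H := cfc Real.sqrt Sinv with hR
  have hRsa : IsSelfAdjoint R := cfc_predicate _ _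
  have hsqrtcont : ContinuousOn Real.sqrt (spectrum ℝ Sinv) := Real.continuous_sqrt.continuousOn
  have hR2 : R * R = Sinv := by
    rw [hR, ← cfc_mul _ _ Sinv hsqrtcont hsqrtcont]
    have hc' : ∀ x ∈ spectrum ℝ Sinv, Real.sqrt x * Real.sqrt x = x := fun x hx =>
      Real.mul_self_sqrt (spectrum_nonneg_of_nonneg hSinv_nonneg hx)
    rw [cfc_congr hc']
    exact cfc_id' ℝ Sinv
  have hcomm_R : ∀ b : H →L[ℂ] H, b * Sinv = Sinv * b → b * R = R * b := fun b hb =>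
    commute_cfc_of_commute hSinvsa' hb Real.sqrt
  have hPWS_comm : PW * S = S * PW := by rw [hPWS, hSPW]
  have hPWSinv : PW * Sinv = Sinv * PW := comm_inv hSS hSS' hPWS_comm
  have hPWR : PW * R = R * PW := hcomm_R PW hPWSinv
  set v : H →L[ℂ] H := T * R with hv
  have hvPW : v * PW = v := by
    rw [hv, mul_assoc, ← hPWR, ← mul_assoc, hTPW]
  have hstarTT : star T * T = S - 1 + PW := by rw [hS]; abel
  have hScomm : S * Sinv = Sinv * S := by rw [hSS, hSS']
  have hSR : S * R = R * S := hcomm_R S hScomm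
  have hRSR : R * S * R = 1 := by
    calc R * S * R = R * (S * R) := by rw [mul_assoc]
      _ = R * (R * S) := by rw [hSR]
      _ = (R * R) * S := by rw [mul_assoc]
      _ = 1 := by rw [hR2, hSS']
  have hSinvPW : Sinv * PW = Sinv - 1 + PW := by
    have h1 : Sinv * (1 - PW) = 1 - PW := by
      calc Sinv * (1 - PW) = Sinv * (S * (1 - PW)) := by rw [hS1PW]
        _ = (Sinv * S) * (1 - PW) := by rw [mul_assoc]
        _ = 1 - PW := by rw [hSS', one_mul]
    have h2 : Sinv * PW = Sinv - Sinv * (1 - PW) := by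
      rw [mul_sub, mul_one]; abel
    rw [h2, h1]; abel
  have hvv : star v * v = PW := by
    have e1 : star v * v = R * (star T * T) * R := by
      rw [hv, star_mul, hRsa.star_eq]
      simp only [mul_assoc]
    rw [e1, hstarTT]
    have e2 : R * (S - 1 + PW) * R = R * S * R - R * R + R * (PW * R) := by
      noncomm_ring
    rw [e2, hRSR, hR2]
    have e3 : R * (PW * R) = Sinv - 1 + PW := by
      calc R * (PW * R) = R * (R * PW) := by rw [hPWR]
        _ = (R * R) * PW := by rw [mul_assoc]
        _ = Sinv * PW := by rw [hR2]
        _ = Sinv - 1 + PW := hSinvPW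
    rw [e3]
    abel
  -- `v * star v` is the orthogonal projection onto `K`
  have hQsa : star (v * star v) = v * star v := by rw [star_mul, star_star]
  have hQidem : (v * star v) * (v * star v) = v * star v := by
    have e : (v * star v) * (v * star v) = (v * (star v * v)) * star v := by
      simp only [mul_assoc]
    rw [e, hvv, hvPW]
  have hrangeT : LinearMap.range (T : H →ₗ[ℂ] H) = (LinearMap.ker (D : H →ₗ[ℂ] H) ⊓ LinearMap.range (F : H →ₗ[ℂ] H) : Submodule ℂ H) := by
    apply le_antisymm
    · rintro y ⟨x, rfl⟩
      have h1 : T x ∈ F '' ((LinearMap.ker ((D * F : H →L[ℂ] H) : H →ₗ[ℂ] H) ⊓ (LinearMap.ker (F : H →ₗ[ℂ] H))ᗮ : Submodule ℂ H) : Set H) :=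
        ⟨PW x, hPW.2.2 ▸ ⟨x, rfl⟩, rfl⟩
      rw [part2 D F] at h1
      exact h1
    · intro y hy
      have h1 : (y : H) ∈ F '' ((LinearMap.ker ((D * F : H →L[ℂ] H) : H →ₗ[ℂ] H) ⊓ (LinearMap.ker (F : H →ₗ[ℂ] H))ᗮ : Submodule ℂ H) : Set H) := by
        rw [part2 D F]; exact hy
      obtain ⟨w, hw, rfl⟩ := h1
      rw [← hPW.2.2] at hw
      obtain ⟨x, hx⟩ := hw
      exact ⟨x, by show F (PW x) = F w; exact congrArg F hx⟩
  have hRright : R * (R * S) = 1 := by rw [← mul_assoc, hR2, hSS']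
  have hrangev : LinearMap.range (v : H →ₗ[ℂ] H) = LinearMap.range (T : H →ₗ[ℂ] H) := by
    apply le_antisymm
    · rintro y ⟨x, rfl⟩
      exact ⟨R x, rfl⟩
    · rintro y ⟨x, rfl⟩
      refine ⟨(R * S) x, ?_⟩
      have h1 : T * R * (R * S) = T := by rw [mul_assoc, hRright, mul_one]
      show (T * R) ((R * S) x) = T x
      have := congrArg (fun W : H →L[ℂ] H => W x) h1
      simpa [mul_apply] using this
  have hrangeQ : LinearMap.range ((v * star v : H →L[ℂ] H) : H →ₗ[ℂ] H) =
      (LinearMap.ker (D : H →ₗ[ℂ] H) ⊓ LinearMap.range (F : H →ₗ[ℂ] H) : Submodule ℂ H) := by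
    rw [← hrangeT, ← hrangev]
    apply le_antisymm
    · rintro y ⟨x, rfl⟩
      exact ⟨star v x, rfl⟩
    · rintro y ⟨x, rfl⟩
      have hvQ : (v * star v) * v = v := by rw [mul_assoc, hvv, hvPW]
      refine ⟨v x, ?_⟩
      have := congrArg (fun W : H →L[ℂ] H => W x) hvQ
      simpa [mul_apply] using this
  have hQopo : IsOrthProjOnto (v * star v) (LinearMap.ker (D : H →ₗ[ℂ] H) ⊓ LinearMap.range (F : H →ₗ[ℂ] H)) :=
    ⟨hQidem, hQsa, hrangeQ⟩
  have hvPK : v * star v = PK := hQopo.unique hPK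
  -- membership in the von Neumann algebra
  have hcent_star : ∀ g ∈ Set.centralizer (A : Set (H →L[ℂ] H)),
      star g ∈ Set.centralizer (A : Set (H →L[ℂ] H)) := by
    intro g hg
    rw [Set.mem_centralizer_iff]
    intro m hm
    have h1 : star m * g = g * star m :=
      Set.mem_centralizer_iff.mp hg (star m)
        (SetLike.mem_coe.mpr (star_mem (SetLike.mem_coe.mp hm)))
    calc m * star g = star (g * star m) := by rw [star_mul, star_star]
      _ = star (star m * g) := by rw [h1]
      _ = star g * m := by rw [star_mul, star_star]
  have hcomm_proj : ∀ (P : H →L[ℂ] H) (Kp : Submodule ℂ H), IsOrthProjOnto P Kp →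
      ∀ g : H →L[ℂ] H, (∀ x ∈ Kp, g x ∈ Kp) → (∀ x ∈ Kp, (star g) x ∈ Kp) → g * P = P * g := by
    intro P Kp hP g hg hg'
    haveI : CompleteSpace Kp := hP.isClosed.completeSpace_coe
    ext x
    obtain ⟨y, hy, z, hz, rfl⟩ := Kp.exists_add_mem_mem_orthogonal x
    have hPy : P y = y := hP.apply_mem_self hy
    have hPz : P z = 0 := hP.apply_eq_zero_iff.mpr hz
    have hgz : g z ∈ Kpᗮ := by
      rw [Submodule.mem_orthogonal]
      intro u hu
      have h1 : (inner ℂ u (g z) : ℂ) = inner ℂ ((adjoint g) u) z := (adjoint_inner_left g z u).symm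
      rw [h1, ← star_eq_adjoint]
      exact (Submodule.mem_orthogonal _ z).mp hz _ (hg' u hu)
    have hl : (g * P) (y + z) = g y := by
      rw [ContinuousLinearMap.mul_apply, map_add, hPy, hPz, add_zero]
    have hr : (P * g) (y + z) = g y := by
      rw [ContinuousLinearMap.mul_apply, map_add, map_add, hP.apply_mem_self (hg y hy),
        hP.apply_eq_zero_iff.mpr hgz, add_zero]
    rw [hl, hr]
  have hPWmem : PW ∈ A := by
    apply A.mem_of_commutes
    intro g hg
    have key : ∀ h : H →L[ℂ] H, h ∈ Set.centralizer (A : Set (H →L[ℂ] H)) →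
        ∀ x ∈ (LinearMap.ker ((D * F : H →L[ℂ] H) : H →ₗ[ℂ] H) ⊓ (LinearMap.ker (F : H →ₗ[ℂ] H))ᗮ : Submodule ℂ H),
        h x ∈ (LinearMap.ker ((D * F : H →L[ℂ] H) : H →ₗ[ℂ] H) ⊓ (LinearMap.ker (F : H →ₗ[ℂ] H))ᗮ : Submodule ℂ H) := by
      intro h hh x hx
      rw [Submodule.mem_inf] at hx ⊢
      constructor
      · rw [LinearMap.mem_ker]
        have hcomm : (D * F) * h = h * (D * F) := Set.mem_centralizer_iff.mp hh _ (SetLike.mem_coe.mpr (mul_mem hD hF))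
        calc (D * F) (h x) = ((D * F) * h) x := rfl
          _ = (h * (D * F)) x := by rw [hcomm]
          _ = h ((D * F) x) := rfl
          _ = 0 := by rw [show (D * F) x = 0 from LinearMap.mem_ker.mp hx.1, map_zero]
      · rw [Submodule.mem_orthogonal]
        intro u hu
        have h1 : (inner ℂ u (h x) : ℂ) = inner ℂ ((adjoint h) u) x := (adjoint_inner_left h x u).symm
        rw [h1, ← star_eq_adjoint]
        have hstarh : star h ∈ Set.centralizer (A : Set (H →L[ℂ] H)) := hcent_star h hh
        have hmemker : (star h) u ∈ LinearMap.ker (F : H →ₗ[ℂ] H) := by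
          rw [LinearMap.mem_ker]
          have hcomm : F * star h = star h * F := Set.mem_centralizer_iff.mp hstarh _ (SetLike.mem_coe.mpr hF)
          calc F ((star h) u) = (F * star h) u := rfl
            _ = (star h * F) u := by rw [hcomm]
            _ = (star h) (F u) := rfl
            _ = 0 := by rw [show F u = 0 from LinearMap.mem_ker.mp hu, map_zero]
        exact (Submodule.mem_orthogonal _ x).mp hx.2 _ hmemker
    exact hcomm_proj PW _ hPW g (key g hg) (key (star g) (hcent_star g hg))
  have hTmem : T ∈ A := mul_mem hF hPWmem
  have hSmem : S ∈ A := add_mem (mul_mem (star_mem hTmem) hTmem) (sub_mem (one_mem A) hPWmem)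
  have hSinvmem : Sinv ∈ A := by
    apply A.mem_of_commutes
    intro g hg
    exact comm_inv hSS hSS' (Set.mem_centralizer_iff.mp hg _ (SetLike.mem_coe.mpr hSmem)).symm
  have hRmem : R ∈ A := by
    apply A.mem_of_commutes
    intro g hg
    exact hcomm_R g (comm_inv hSS hSS' (Set.mem_centralizer_iff.mp hg _ (SetLike.mem_coe.mpr hSmem)).symm)
  have hvmem : v ∈ A := mul_mem hTmem hRmem
  refine ⟨star v, star_mem hvmem, ?_, ?_⟩
  · rw [star_star]; exact hvv
  · rw [star_star]; exact hvPK
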